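/- arXiv:1506.05897 — 3 statements merged into one kernel-verified Lean document; each statement's English description precedes it below -/
import Mathlib

section
/- Let m ≥ 1 and 0 ≤ r ≤ m−1 be integers and let n > (m−r)². In the polynomial ring ℤ[X, Y, Z], the coefficient of the monomial X^n · Y^{r(m−r)} · Z^{m(m−r)−1} in the expansion of (X+Y)^{m(m−r)} · (Y+Z)^{n−1} · (X+Z)^{r(m−r)} equals δ(m,n,r). -/
open Finset MvPolynomial

lemma tri_coeff (a b c : ℕ) (d : Fin 3 →₀ ℕ) :
    coeff d ((X 0 + X 1)^a * (X 1 + X 2)^b * (X 0 + X 2)^c : MvPolynomial (Fin 3) ℤ) =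
    ∑ k ∈ range (c+1), ∑ j ∈ range (b+1), ∑ i ∈ range (a+1),
      if (Finsupp.single 0 (i+k) + Finsupp.single 1 ((a-i)+j) + Finsupp.single 2 ((b-j)+(c-k)) : Fin 3 →₀ ℕ) = d
      then (a.choose i * b.choose j * c.choose k : ℤ) else 0 := by
  rw [add_pow, add_pow, add_pow]
  simp only [Finset.sum_mul, Finset.mul_sum, coeff_sum]
  refine Finset.sum_congr rfl fun k hk => ?_
  refine Finset.sum_congr rfl fun j hj => ?_
  refine Finset.sum_congr rfl fun i hi => ?_
  have h : (X 0 ^ i * X 1 ^ (a - i) * (a.choose i : MvPolynomial (Fin 3) ℤ)) *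
      (X 1 ^ j * X 2 ^ (b - j) * (b.choose j : MvPolynomial (Fin 3) ℤ)) *
      (X 0 ^ k * X 2 ^ (c - k) * (c.choose k : MvPolynomial (Fin 3) ℤ)) =
      monomial (Finsupp.single 0 (i+k) + Finsupp.single 1 ((a-i)+j) + Finsupp.single 2 ((b-j)+(c-k)))
        ((a.choose i * b.choose j * c.choose k : ℤ)) := by
    simp only [X_pow_eq_monomial, ← C_eq_coe_nat, C_apply, monomial_mul]
    rw [monomial_eq_monomial_iff]
    left
    refine ⟨?_, by ring⟩
    ext x
    fin_cases x <;> simp [Finsupp.single_apply]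
  rw [h, coeff_monomial]

lemma single_eq_iff (x y z x' y' z' : ℕ) :
    (Finsupp.single (0:Fin 3) x + Finsupp.single 1 y + Finsupp.single 2 z)
      = (Finsupp.single (0:Fin 3) x' + Finsupp.single 1 y' + Finsupp.single 2 z')
      ↔ (x = x' ∧ y = y' ∧ z = z') := by
  constructor
  · intro h
    refine ⟨?_, ?_, ?_⟩
    · have := DFunLike.congr_fun h 0
      simpa [Finsupp.single_apply] using this
    · have := DFunLike.congr_fun h 1
      simpa [Finsupp.single_apply] using this
    · have := DFunLike.congr_fun h 2
      simpa [Finsupp.single_apply] using this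
  · rintro ⟨rfl, rfl, rfl⟩; rfl

/-- `δ(m,n,r) = Σ_{k ∈ F_{m,n,r}} C(m(m−r), n−k)·C(n−1, k+(m−r)²−1)·C(r(m−r), k)`,
where `F_{m,n,r} = {k : max(0, n−m(m−r)) ≤ k ≤ min(n−(m−r)², r(m−r))}`. -/
def deltaMNR (m n r : ℕ) : ℕ :=
  ∑ k ∈ Finset.Icc (max 0 (n - m * (m - r))) (min (n - (m - r) ^ 2) (r * (m - r))),
    (m * (m - r)).choose (n - k) * (n - 1).choose (k + (m - r) ^ 2 - 1) * (r * (m - r)).choose k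

lemma delta_eq (r t n : ℕ) (ht : 1 ≤ t) (hn : t^2 < n) :
    deltaMNR (r+t) n r = ∑ k ∈ range (r*t+1),
      ((r+t)*t).choose (n-k) * (n-1).choose (k+t^2-1) * (r*t).choose k := by
  unfold deltaMNR
  simp only [Nat.add_sub_cancel_left]
  refine Finset.sum_subset ?_ ?_
  · intro k hk
    simp only [Finset.mem_Icc, Finset.mem_range] at hk ⊢
    omega
  · intro k hk hnk
    simp only [Finset.mem_Icc, Finset.mem_range] at hk hnk
    have hst : t ^ 2 ≥ 1 := Nat.one_le_pow _ _ ht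
    rcases Nat.lt_or_ge k (n - (r+t)*t) with h | h
    · have : (r+t)*t < n - k := by omega
      rw [Nat.choose_eq_zero_of_lt this]
      simp
    · have h2 : n - t^2 < k := by omega
      have : n - 1 < k + t^2 - 1 := by omega
      rw [Nat.choose_eq_zero_of_lt this]
      simp

theorem stmt_2 (m r n : ℕ) (hm : 1 ≤ m) (hrm : r ≤ m - 1) (hn : (m - r) ^ 2 < n) :
    MvPolynomial.coeff
      (Finsupp.single (0 : Fin 3) n + Finsupp.single 1 (r * (m - r)) +
        Finsupp.single 2 (m * (m - r) - 1))
      ((MvPolynomial.X 0 + MvPolynomial.X 1) ^ (m * (m - r)) *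
        (MvPolynomial.X 1 + MvPolynomial.X 2) ^ (n - 1) *
        (MvPolynomial.X 0 + MvPolynomial.X 2) ^ (r * (m - r)) : MvPolynomial (Fin 3) ℤ) =
      (deltaMNR m n r : ℤ) := by
  obtain ⟨t, rfl⟩ : ∃ t, m = r + t := ⟨m - r, by omega⟩
  have ht : 1 ≤ t := by omega
  simp only [Nat.add_sub_cancel_left] at hn ⊢
  set a := (r+t)*t with ha
  set c := r*t with hc
  have hac : a = c + t^2 := by rw [ha, hc]; ring
  have hs : 1 ≤ t^2 := Nat.one_le_pow _ _ ht
  rw [tri_coeff, delta_eq r t n ht hn]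
  push_cast
  refine Finset.sum_congr rfl fun k hk => ?_
  rw [Finset.mem_range] at hk
  simp only [single_eq_iff]
  rcases Nat.lt_or_ge n (k + t^2) with hcase | hcase
  · -- k too large: both sides zero
    have hz : (n-1).choose (k + t^2 - 1) = 0 :=
      Nat.choose_eq_zero_of_lt (by omega)
    rw [hz]
    push_cast
    rw [mul_zero, zero_mul]
    refine Finset.sum_eq_zero fun j hj => Finset.sum_eq_zero fun i hi => ?_
    rw [Finset.mem_range] at hi hj
    rw [if_neg]
    rintro ⟨h1, h2, h3⟩
    omega
  · rcases Nat.lt_or_ge (a + k) n with hcase2 | hcase2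
    · -- n - k > a : both sides zero
      have hz : a.choose (n - k) = 0 := Nat.choose_eq_zero_of_lt (by omega)
      rw [hz]
      push_cast
      rw [zero_mul, zero_mul]
      refine Finset.sum_eq_zero fun j hj => Finset.sum_eq_zero fun i hi => ?_
      rw [Finset.mem_range] at hi hj
      rw [if_neg]
      rintro ⟨h1, h2, h3⟩
      omega
    · -- main case
      have hj0 : n - t^2 - k ∈ range (n - 1 + 1) := by
        rw [Finset.mem_range]; omega
      rw [Finset.sum_eq_single_of_mem (n - t^2 - k) hj0]
      · have hi0 : n - k ∈ range (a + 1) := by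
          rw [Finset.mem_range]; omega
        rw [Finset.sum_eq_single_of_mem (n - k) hi0]
        · rw [if_pos ⟨by omega, by omega, by omega⟩]
          have hsym : (n-1).choose (n - t^2 - k) = (n-1).choose (k + t^2 - 1) := by
            rw [← Nat.choose_symm (by omega : n - t^2 - k ≤ n - 1)]
            congr 1
            omega
          rw [hsym]
        · intro i hi hne
          rw [Finset.mem_range] at hi
          rw [if_neg]
          rintro ⟨h1, h2, h3⟩
          omega
      · intro j hj hne
        rw [Finset.mem_range] at hj
        refine Finset.sum_eq_zero fun i hi => ?_
        rw [Finset.mem_range] at hi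
        rw [if_neg]
        rintro ⟨h1, h2, h3⟩
        omega
end

section
/- Let m ≥ 1, 1 ≤ r ≤ m−1 and n > (m−r)² be integers. Define Σ_B = Σ_{k=0}^{r(m−r)} C(m(m−r)−1, n−k)·C(n−1, k−1+(m−r)²)·C(r(m−r), k). Then Σ_B ≤ δ(m,n,r). -/
theorem stmt_4 (m n r : ℕ) (hm : 1 ≤ m) (hr : 1 ≤ r) (hrm : r ≤ m - 1)
    (hn : (m - r) ^ 2 < n) :
    (∑ k ∈ Finset.range (r * (m - r) + 1),
        (m * (m - r) - 1).choose (n - k) * (n - 1).choose (k + (m - r) ^ 2 - 1) *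
          (r * (m - r)).choose k) ≤ deltaMNR m n r := by
  unfold deltaMNR
  rw [max_eq_right (Nat.zero_le _)]
  have hsub : Finset.Icc (n - m * (m - r)) (min (n - (m - r) ^ 2) (r * (m - r))) ⊆
      Finset.range (r * (m - r) + 1) := by
    intro k hk
    simp only [Finset.mem_Icc, Finset.mem_range] at hk ⊢
    omega
  rw [Finset.sum_subset hsub ?_]
  · apply Finset.sum_le_sum
    intro k _
    apply Nat.mul_le_mul_right
    apply Nat.mul_le_mul_right
    exact Nat.choose_le_choose _ (Nat.sub_le _ _)
  · intro k hk hk2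
    simp only [Finset.mem_Icc, Finset.mem_range, not_and_or, not_le] at hk hk2
    rcases hk2 with h1 | h2
    · rw [Nat.choose_eq_zero_of_lt (show m * (m - r) < n - k by omega)]
      ring
    · rw [Nat.choose_eq_zero_of_lt (show n - 1 < k + (m - r) ^ 2 - 1 by omega)]
      ring
end

section
/- For (x₁, x₂, x₃) ∈ ℝ³, the real symmetric matrix A(x) = [[1, x₁, 0, x₁], [x₁, 1, x₂, 0], [0, x₂, 1, x₃], [x₁, 0, x₃, 1]] has rank at most 2 if and only if 2x₁² = 1, 2x₃² = 1 and x₂ = −x₃. In particular, the set of real points where rank A(x) ≤ 2 consists of exactly four points. -/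
lemma rank_submatrix_le' (A : Matrix (Fin 4) (Fin 4) ℝ) (f g : Fin 3 → Fin 4) :
    (A.submatrix f g).rank ≤ A.rank := by
  have h1 : ((1 : Matrix (Fin 4) (Fin 4) ℝ).submatrix f (Equiv.refl (Fin 4))) * A
      = A.submatrix f id := by
    rw [Matrix.one_submatrix_mul]; rfl
  have h2 : (A.submatrix f id) * ((1 : Matrix (Fin 4) (Fin 4) ℝ).submatrix (Equiv.refl (Fin 4)) g)
      = A.submatrix f g := by
    rw [Matrix.mul_submatrix_one]
    simp [Matrix.submatrix_submatrix]
  rw [← h2]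
  refine (Matrix.rank_mul_le_left _ _).trans ?_
  rw [← h1]
  exact Matrix.rank_mul_le_right _ _

lemma minor_det_zero (A : Matrix (Fin 4) (Fin 4) ℝ) (h : A.rank ≤ 2) (f g : Fin 3 → Fin 4) :
    (A.submatrix f g).det = 0 := by
  by_contra hd
  have hu : IsUnit (A.submatrix f g) := (Matrix.isUnit_iff_isUnit_det _).mpr (isUnit_iff_ne_zero.mpr hd)
  have := Matrix.rank_of_isUnit _ hu
  have hle := (rank_submatrix_le' A f g).trans h
  rw [this] at hle
  simp at hle

/-- The linear matrix of the "pillow" spectrahedron. -/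
def pillowMat (x₁ x₂ x₃ : ℝ) : Matrix (Fin 4) (Fin 4) ℝ :=
  !![1, x₁, 0, x₁; x₁, 1, x₂, 0; 0, x₂, 1, x₃; x₁, 0, x₃, 1]

lemma forward (x₁ x₂ x₃ : ℝ) (h : (pillowMat x₁ x₂ x₃).rank ≤ 2) :
    2 * x₁ ^ 2 = 1 ∧ 2 * x₃ ^ 2 = 1 ∧ x₂ = -x₃ := by
  have e1 := minor_det_zero _ h ![0,1,2] ![0,1,2]
  have e2 := minor_det_zero _ h ![0,2,3] ![0,2,1]
  have e3 := minor_det_zero _ h ![0,2,3] ![0,2,3]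
  rw [Matrix.det_fin_three] at e1 e2 e3
  simp [pillowMat] at e1 e2 e3
  -- e1 : 1 - x₂² - x₁² = 0 (some form), e2 : -x₂x₃ - x₁² = 0, e3 : 1 - x₃² - x₁² = 0
  have h1 : 2 * x₁ ^ 2 = 1 := by nlinarith [sq_nonneg x₁, sq_nonneg x₂, sq_nonneg x₃, sq_nonneg (x₂ - x₃), sq_nonneg (x₂ + x₃)]
  have h3 : 2 * x₃ ^ 2 = 1 := by nlinarith [sq_nonneg (x₂ - x₃), sq_nonneg (x₂ + x₃)]
  refine ⟨h1, h3, ?_⟩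
  nlinarith [sq_nonneg (x₂ + x₃)]

lemma backward (x₁ x₃ : ℝ) (h1 : 2 * x₁ ^ 2 = 1) (h3 : 2 * x₃ ^ 2 = 1) :
    (pillowMat x₁ (-x₃) x₃).rank ≤ 2 := by
  have hBC : pillowMat x₁ (-x₃) x₃ =
      (!![1,0; x₁,-x₃; 0,1; x₁,x₃] : Matrix (Fin 4) (Fin 2) ℝ) *
      (!![1, x₁, 0, x₁; 0, -x₃, 1, x₃] : Matrix (Fin 2) (Fin 4) ℝ) := by
    ext i j
    fin_cases i <;> fin_cases j <;>
      simp [pillowMat, Matrix.mul_apply, Fin.sum_univ_succ] <;> nlinarith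
  rw [hBC]
  refine (Matrix.rank_mul_le_left _ _).trans ?_
  have := Matrix.rank_le_card_width (!![1,0; x₁,-x₃; 0,1; x₁,x₃] : Matrix (Fin 4) (Fin 2) ℝ)
  simpa using this

theorem stmt_15 :
    (∀ x₁ x₂ x₃ : ℝ,
      (pillowMat x₁ x₂ x₃).rank ≤ 2 ↔ (2 * x₁ ^ 2 = 1 ∧ 2 * x₃ ^ 2 = 1 ∧ x₂ = -x₃)) ∧
    {p : ℝ × ℝ × ℝ | (pillowMat p.1 p.2.1 p.2.2).rank ≤ 2}.ncard = 4 := by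
  have part1 : ∀ x₁ x₂ x₃ : ℝ,
      (pillowMat x₁ x₂ x₃).rank ≤ 2 ↔ (2 * x₁ ^ 2 = 1 ∧ 2 * x₃ ^ 2 = 1 ∧ x₂ = -x₃) := by
    intro x₁ x₂ x₃
    constructor
    · exact forward x₁ x₂ x₃
    · rintro ⟨h1, h3, rfl⟩
      exact backward x₁ x₃ h1 h3
  refine ⟨part1, ?_⟩
  set s : ℝ := Real.sqrt 2 / 2 with hs
  have hs2 : 2 * s ^ 2 = 1 := by
    rw [hs]; rw [div_pow, Real.sq_sqrt (by norm_num : (2:ℝ)≥0) ]; norm_num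
  have hspos : 0 < s := by positivity
  have hne : s ≠ -s := by intro h; nlinarith
  have hset : {p : ℝ × ℝ × ℝ | (pillowMat p.1 p.2.1 p.2.2).rank ≤ 2} =
      {(s, -s, s), (s, s, -s), (-s, -s, s), (-s, s, -s)} := by
    ext ⟨a, b, c⟩
    simp only [Set.mem_setOf_eq, part1 a b c, Set.mem_insert_iff, Set.mem_singleton_iff,
      Prod.mk.injEq]
    constructor
    · rintro ⟨h1, h3, rfl⟩
      have ha : a = s ∨ a = -s := by
        have : (a - s) * (a + s) = 0 := by nlinarith
        rcases mul_eq_zero.mp this with h | h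
        · left; linarith
        · right; linarith
      have hc : c = s ∨ c = -s := by
        have : (c - s) * (c + s) = 0 := by nlinarith
        rcases mul_eq_zero.mp this with h | h
        · left; linarith
        · right; linarith
      rcases ha with rfl | rfl <;> rcases hc with rfl | rfl <;> simp
    · rintro (⟨rfl, rfl, rfl⟩ | ⟨rfl, rfl, rfl⟩ | ⟨rfl, rfl, rfl⟩ | ⟨rfl, rfl, rfl⟩) <;>
        exact ⟨by nlinarith, by nlinarith, by ring⟩
  rw [hset]
  have hne' : (-s : ℝ) ≠ s := fun h => hne h.symm
  rw [Set.ncard_insert_of_notMem (by simp [Prod.ext_iff, hne, hne']),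
    Set.ncard_insert_of_notMem (by simp [Prod.ext_iff, hne, hne']),
    Set.ncard_pair (by simp [Prod.ext_iff, hne, hne'])]
end
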